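/- arXiv:1110.0541 — 3 statements merged into one kernel-verified Lean document; each statement's English description precedes it below -/
import Mathlib

section
/- Let A = λ·a^{⊗m} + E where a ∈ R^n is unit length, λ ∈ R, and E is a symmetric m-mode tensor. If (x_p, λ_p) is a principal eigenpair of A (i.e., x_p is unit length, A x_p^{m−1} = λ_p x_p, and |λ_p| is maximal among all eigenvalues), and β(E)/(m−1) bounds |E y^m| for all unit y, then |λ| − β(E)/(m−1) ≤ |λ_p| ≤ |λ| + β(E)/(m−1). -/
open Finset
open RealInnerProductSpace

/-- scalar contraction `A x^m` of an `m`-mode tensor with a vector. -/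
noncomputable def Axm {n m : ℕ} (A : (Fin m → Fin n) → ℝ)
    (x : EuclideanSpace ℝ (Fin n)) : ℝ :=
  ∑ i : Fin m → Fin n, A i * ∏ k : Fin m, x (i k)

/-- vector contraction `A x^{m−1}` of an `(s+2)`-mode tensor. -/
noncomputable def Axm1 {n s : ℕ} (A : (Fin (s + 2) → Fin n) → ℝ)
    (x : EuclideanSpace ℝ (Fin n)) : EuclideanSpace ℝ (Fin n) :=
  WithLp.toLp 2 (fun t => ∑ j : Fin (s + 1) → Fin n, A (Fin.cons t j) * ∏ k : Fin (s + 1), x (j k))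

lemma Axm_eq_sum_Axm1 {n s : ℕ} (A : (Fin (s + 2) → Fin n) → ℝ)
    (x : EuclideanSpace ℝ (Fin n)) :
    Axm A x = ∑ t : Fin n, x t * Axm1 A x t := by
  rw [Axm]
  rw [← Fintype.sum_equiv (Fin.consEquiv (fun _ : Fin (s+2) => Fin n))
      (fun p => A (Fin.cons p.1 p.2) * (∏ k : Fin (s+1), x (p.2 k)) * x p.1) _ ?_]
  · rw [Fintype.sum_prod_type]
    simp [Axm1, Finset.mul_sum, mul_comm, mul_assoc, mul_left_comm]
  · rintro ⟨t, j⟩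
    simp only [Fin.consEquiv, Equiv.coe_fn_mk]
    have h : ∏ k : Fin (s + 2), x ((Fin.cons t j : Fin (s + 2) → Fin n) k) = x t * ∏ k : Fin (s + 1), x (j k) := by
      rw [Fin.prod_univ_succ]
      congr 1
    rw [h]; ring

lemma Axm_rank_one {n m : ℕ} (a x : EuclideanSpace ℝ (Fin n)) (lam : ℝ) :
    Axm (fun i => lam * ∏ k : Fin m, a (i k)) x
      = lam * (∑ j, a j * x j) ^ m := by
  rw [Axm, Fintype.sum_pow, Finset.mul_sum]
  congr 1; ext i
  rw [mul_assoc, ← Finset.prod_mul_distrib]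

/-- for `A = λ·a^{⊗m} + E` (`m = s+2`, `a` unit), a principal eigenpair
`(x_p, λ_p)` satisfies `|λ| − β(E)/(m−1) ≤ |λ_p| ≤ |λ| + β(E)/(m−1)`. -/
theorem principal_eigenvalue_bounds {n s : ℕ} (a : EuclideanSpace ℝ (Fin n))
    (ha : ‖a‖ = 1) (lam betaE : ℝ) (E : (Fin (s + 2) → Fin n) → ℝ)
    (A : (Fin (s + 2) → Fin n) → ℝ)
    (hA : A = fun i => lam * (∏ k : Fin (s + 2), a (i k)) + E i)
    (hE : ∀ y : EuclideanSpace ℝ (Fin n), ‖y‖ = 1 →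
      |Axm E y| ≤ betaE / (s + 1))
    (xp : EuclideanSpace ℝ (Fin n)) (lamp : ℝ) (hxp : ‖xp‖ = 1)
    (heig : Axm1 A xp = lamp • xp)
    (hprin : ∀ y : EuclideanSpace ℝ (Fin n), ‖y‖ = 1 → |Axm A y| ≤ |lamp|) :
    |lam| - betaE / (s + 1) ≤ |lamp| ∧ |lamp| ≤ |lam| + betaE / (s + 1) := by
  have hsplit : ∀ y : EuclideanSpace ℝ (Fin n),
      Axm A y = lam * (∑ j, a j * y j) ^ (s + 2) + Axm E y := by
    intro y
    rw [hA]
    have : Axm (fun i => lam * (∏ k : Fin (s+2), a (i k)) + E i) y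
        = Axm (fun i => lam * ∏ k : Fin (s+2), a (i k)) y + Axm E y := by
      simp [Axm, add_mul, Finset.sum_add_distrib]
    rw [this, Axm_rank_one]
  -- Axm A xp = lamp
  have hAxp : Axm A xp = lamp := by
    rw [Axm_eq_sum_Axm1, heig]
    have : ∑ t, xp t * (lamp • xp) t = lamp * ∑ t, xp t * xp t := by
      simp [Finset.mul_sum, mul_comm, mul_left_comm]
    rw [this]
    have hn : ∑ t, xp t * xp t = 1 := by
      have := hxp
      rw [EuclideanSpace.norm_eq] at this
      have h2 : ∑ t, xp t ^ 2 = 1 := by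
        have := congrArg (· ^ 2) this
        simpa [Real.sq_sqrt (Finset.sum_nonneg fun i _ => sq_nonneg _), sq_abs] using this
      simpa [sq] using h2
    rw [hn, mul_one]
  -- inner products
  have hinner : ∀ x y : EuclideanSpace ℝ (Fin n), (⟪x, y⟫ : ℝ) = ∑ j, x j * y j := by
    intro x y; rw [PiLp.inner_apply]; simp [mul_comm]
  have haxp : |∑ j, a j * xp j| ≤ 1 := by
    rw [← hinner]
    calc |⟪a, xp⟫| ≤ ‖a‖ * ‖xp‖ := abs_real_inner_le_norm a xp
    _ = 1 := by rw [ha, hxp]; ring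
  have haa : ∑ j, a j * a j = 1 := by
    rw [← hinner, real_inner_self_eq_norm_sq, ha]; norm_num
  constructor
  · -- |lam| ≤ |Axm A a| + |Axm E a| ≤ |lamp| + β/(s+1)
    have h1 : Axm A a = lam + Axm E a := by
      rw [hsplit a, haa, one_pow, mul_one]
    have h2 : |lam| ≤ |Axm A a| + |Axm E a| := by
      have : lam = Axm A a - Axm E a := by rw [h1]; ring
      rw [this]; exact abs_sub _ _
    have h3 := hprin a ha
    have h4 := hE a ha
    linarith
  · have h1 : |lamp| ≤ |lam * (∑ j, a j * xp j) ^ (s+2)| + |Axm E xp| := by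
      rw [← hAxp, hsplit xp]; exact abs_add_le _ _
    have h2 : |lam * (∑ j, a j * xp j) ^ (s+2)| ≤ |lam| := by
      rw [abs_mul, abs_pow]
      calc |lam| * |∑ j, a j * xp j| ^ (s+2)
          ≤ |lam| * 1 := by
            apply mul_le_mul_of_nonneg_left _ (abs_nonneg _)
            exact pow_le_one₀ (abs_nonneg _) haxp
        _ = |lam| := mul_one _
    have h3 := hE xp hxp
    linarith
end

section
/- Let A = λ·a^{⊗m} + E with a unit length, λ ≠ 0, and suppose |E y^m| ≤ c for all unit vectors y. If (x_p, λ_p) is a principal eigenpair of A with corresponding angle θ between x_p and a (so cos θ = ⟨a, x_p⟩), then |cos θ|^m ≥ 1 − 2c/|λ|. -/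
open Finset

lemma Axm_eq_sum {n s : ℕ} (A : (Fin (s + 2) → Fin n) → ℝ)
    (x : EuclideanSpace ℝ (Fin n)) :
    Axm A x = ∑ t : Fin n, Axm1 A x t * x t := by
  rw [Axm]
  rw [← Equiv.sum_comp (Fin.consEquiv fun _ : Fin (s + 2) => Fin n)
      (fun i => A i * ∏ k : Fin (s + 2), x (i k))]
  rw [Fintype.sum_prod_type]
  simp only [Axm1, PiLp.toLp_apply, Finset.sum_mul]
  refine Finset.sum_congr rfl fun t _ => Finset.sum_congr rfl fun j _ => ?_
  simp only [Fin.consEquiv_apply]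
  rw [Fin.prod_univ_succ, Fin.cons_zero]
  have : ∀ k : Fin (s+1), x (Fin.cons (α := fun _ => Fin n) t j k.succ) = x (j k) :=
    fun k => by rw [Fin.cons_succ]
  rw [Finset.prod_congr rfl fun k _ => this k]
  have hc : (Fin.consEquiv fun _ : Fin (s + 2) => Fin n) (t, j) = Fin.cons t j := rfl
  rw [hc]; ring

lemma Axm_rank1 {n m : ℕ} (lam : ℝ) (a x : EuclideanSpace ℝ (Fin n)) :
    Axm (fun i => lam * ∏ k : Fin m, a (i k)) x
      = lam * (∑ j, a j * x j) ^ m := by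
  rw [Axm, Fintype.sum_pow, Finset.mul_sum]
  refine Finset.sum_congr rfl fun i _ => ?_
  rw [mul_assoc, ← Finset.prod_mul_distrib]

/-- for `A = λ·a^{⊗m} + E` (`m = s+2`, `a` unit, `λ ≠ 0`) with noise bound
`|E y^m| ≤ c` on unit vectors, a principal eigenpair `(x_p, λ_p)` with `cos θ = ⟨a,x_p⟩`
satisfies `|cos θ|^m ≥ 1 − 2c/|λ|`. -/
theorem principal_eigenvector_angle {n s : ℕ} (a : EuclideanSpace ℝ (Fin n))
    (ha : ‖a‖ = 1) (lam c : ℝ) (hlam : lam ≠ 0)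
    (E : (Fin (s + 2) → Fin n) → ℝ) (A : (Fin (s + 2) → Fin n) → ℝ)
    (hA : A = fun i => lam * (∏ k : Fin (s + 2), a (i k)) + E i)
    (hE : ∀ y : EuclideanSpace ℝ (Fin n), ‖y‖ = 1 → |Axm E y| ≤ c)
    (xp : EuclideanSpace ℝ (Fin n)) (lamp : ℝ) (hxp : ‖xp‖ = 1)
    (heig : Axm1 A xp = lamp • xp)
    (hprin : ∀ y : EuclideanSpace ℝ (Fin n), ‖y‖ = 1 → |Axm A y| ≤ |lamp|) :
    |inner ℝ a xp| ^ (s + 2) ≥ 1 - 2 * c / |lam| := by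
  have hlampos : (0:ℝ) < |lam| := abs_pos.mpr hlam
  -- inner products as sums
  have hinner : ∀ u v : EuclideanSpace ℝ (Fin n),
      (inner ℝ u v : ℝ) = ∑ j, u j * v j := by
    intro u v
    rw [PiLp.inner_apply]
    simp [RCLike.inner_apply, mul_comm]
  -- ∑ xp j * xp j = 1
  have hxpsum : ∑ j, xp j * xp j = 1 := by
    have := real_inner_self_eq_norm_sq xp
    rw [hinner xp xp] at this
    rw [this, hxp]; norm_num
  have hasum : ∑ j, a j * a j = 1 := by
    have := real_inner_self_eq_norm_sq a
    rw [hinner a a] at this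
    rw [this, ha]; norm_num
  -- Axm A decomposition
  have hdecomp : ∀ y : EuclideanSpace ℝ (Fin n),
      Axm A y = lam * (∑ j, a j * y j) ^ (s + 2) + Axm E y := by
    intro y
    rw [hA]
    have : Axm (fun i => lam * (∏ k : Fin (s + 2), a (i k)) + E i) y
        = Axm (fun i => lam * ∏ k : Fin (s + 2), a (i k)) y + Axm E y := by
      rw [Axm, Axm, Axm, ← Finset.sum_add_distrib]
      refine Finset.sum_congr rfl fun i _ => ?_
      ring
    rw [this, Axm_rank1]
  -- Axm A xp = lamp
  have hAxp : Axm A xp = lamp := by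
    rw [Axm_eq_sum, heig]
    simp only [PiLp.smul_apply, smul_eq_mul]
    simp only [mul_assoc, ← Finset.mul_sum]
    rw [hxpsum, mul_one]
  -- |lamp| ≥ |lam| - c
  have hAa : Axm A a = lam + Axm E a := by
    rw [hdecomp a, hasum, one_pow, mul_one]
  have h1 : |lam| - c ≤ |lamp| := by
    have h2 := hprin a ha
    have h3 := hE a ha
    rw [hAa] at h2
    have : |lam| - |Axm E a| ≤ |lam + Axm E a| := by
      have := abs_add_le (lam + Axm E a) (-(Axm E a))
      simp at this
      linarith [abs_neg (Axm E a) ▸ this]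
    linarith
  -- main bound
  have hcos : (inner ℝ a xp : ℝ) = ∑ j, a j * xp j := hinner a xp
  have hmain : lam * (∑ j, a j * xp j) ^ (s + 2) = lamp - Axm E xp := by
    have := hdecomp xp
    rw [hAxp] at this
    linarith
  have hbound : |lam| - 2 * c ≤ |lam| * |(inner ℝ a xp : ℝ)| ^ (s + 2) := by
    have h4 : |lam * (∑ j, a j * xp j) ^ (s + 2)| ≥ |lamp| - c := by
      rw [hmain]
      have h5 := hE xp hxp
      have := abs_sub_abs_le_abs_sub lamp (Axm E xp)
      calc |lamp| - c ≤ |lamp| - |Axm E xp| := by linarith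
        _ ≤ |lamp - Axm E xp| := this
    rw [abs_mul, abs_pow, ← hcos] at h4
    linarith
  rw [ge_iff_le, sub_le_iff_le_add]
  have hdiv : 2 * c / |lam| * |lam| = 2 * c := div_mul_cancel₀ _ (ne_of_gt hlampos)
  nlinarith [hbound, hdiv, hlampos]
end

section
/- Let A = λ·a^{⊗m} + E be an m-mode symmetric tensor with ‖a‖=1, λ > 0, and suppose |y^T (E x^{m−2}) y| ≤ β(E)/(m−1) for all unit vectors x, y. Let (x_p, λ_p) be a negative-stable eigenpair of A with λ_p + α > 0, and let θ be the angle between x_p and a. If α > (−λ_p + (m−1)λ|sin θ cos^{m−2} θ| + β(E))/2, then for every unit vector y ⊥ x_p, −1 < ((m−1) y^T(A x_p^{m−2})y + α)/(λ_p + α). -/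
open Finset

/-- matrix contraction `A x^{m−2}` for `m = s+2`. -/
noncomputable def Axm2 {n s : ℕ} (A : (Fin (s + 2) → Fin n) → ℝ)
    (x : EuclideanSpace ℝ (Fin n)) : Matrix (Fin n) (Fin n) ℝ :=
  fun t u => ∑ j : Fin s → Fin n,
    A (Fin.cons t (Fin.cons u j)) * ∏ k : Fin s, x (j k)

/-- quadratic form `y^T M y`. -/
noncomputable def quadForm {n : ℕ} (M : Matrix (Fin n) (Fin n) ℝ)
    (y : EuclideanSpace ℝ (Fin n)) : ℝ :=
  ∑ t : Fin n, ∑ u : Fin n, y t * M t u * y u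

theorem sum_prod_pow {n s : ℕ} (g : Fin n → ℝ) :
    ∑ j : Fin s → Fin n, ∏ k : Fin s, g (j k) = (∑ i, g i) ^ s := by
  have : (∑ i, g i) ^ s = ∏ _k : Fin s, (∑ i, g i) := by
    simp [Finset.prod_const]
  rw [this, Finset.prod_univ_sum]
  simp [Fintype.piFinset_univ]

theorem quad_decomp {n s : ℕ} (a : EuclideanSpace ℝ (Fin n))
    (lam : ℝ) (E A : (Fin (s + 2) → Fin n) → ℝ)
    (hA : A = fun i => lam * (∏ k : Fin (s + 2), a (i k)) + E i)
    (xp y : EuclideanSpace ℝ (Fin n)) :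
    quadForm (Axm2 A xp) y =
      lam * (∑ i, a i * xp i) ^ s * (∑ t, y t * a t) ^ 2
        + quadForm (Axm2 E xp) y := by
  subst hA
  simp only [quadForm, Axm2]
  have h1 : ∀ t u : Fin n,
      (∑ j : Fin s → Fin n,
        (lam * ∏ k : Fin (s+2), a ((Fin.cons t (Fin.cons u j) : Fin (s+2) → Fin n) k) + E ((Fin.cons t (Fin.cons u j) : Fin (s+2) → Fin n)))
          * ∏ k : Fin s, xp (j k))
      = lam * a t * a u * (∑ i, a i * xp i) ^ s
        + ∑ j : Fin s → Fin n, E ((Fin.cons t (Fin.cons u j) : Fin (s+2) → Fin n)) * ∏ k : Fin s, xp (j k) := by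
    intro t u
    simp only [add_mul, Finset.sum_add_distrib]
    congr 1
    have h2 : ∀ j : Fin s → Fin n,
        (∏ k : Fin (s+2), a ((Fin.cons t (Fin.cons u j) : Fin (s+2) → Fin n) k))
          = a t * (a u * ∏ k : Fin s, a (j k)) := by
      intro j
      rw [Fin.prod_univ_succ, Fin.prod_univ_succ]
      rfl
    calc ∑ j : Fin s → Fin n, lam * (∏ k : Fin (s+2), a ((Fin.cons t (Fin.cons u j) : Fin (s+2) → Fin n) k))
            * ∏ k : Fin s, xp (j k)
        = lam * a t * a u * ∑ j : Fin s → Fin n, ∏ k : Fin s, (a (j k) * xp (j k)) := by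
          rw [Finset.mul_sum]
          refine Finset.sum_congr rfl fun j _ => ?_
          rw [h2 j, Finset.prod_mul_distrib]; ring
      _ = lam * a t * a u * (∑ i, a i * xp i) ^ s := by
          rw [sum_prod_pow (g := fun i => a i * xp i)]
  simp only [h1]
  have hsq : (∑ t, y t * a t) ^ 2 = ∑ t, ∑ u, (y t * a t) * (y u * a u) := by
    rw [sq, Finset.sum_mul_sum]
  have h3 : ∀ t u : Fin n,
      y t * (lam * a t * a u * (∑ i, a i * xp i) ^ s
        + ∑ j : Fin s → Fin n, E ((Fin.cons t (Fin.cons u j) : Fin (s+2) → Fin n)) * ∏ k : Fin s, xp (j k)) * y u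
      = lam * (∑ i, a i * xp i) ^ s * ((y t * a t) * (y u * a u))
        + y t * (∑ j : Fin s → Fin n, E ((Fin.cons t (Fin.cons u j) : Fin (s+2) → Fin n)) * ∏ k : Fin s, xp (j k)) * y u := by
    intro t u; ring
  simp only [h3, Finset.sum_add_distrib, ← Finset.mul_sum]
  rw [hsq, ← Finset.sum_mul_sum, Finset.sum_mul]

/-- stability of a (negative-stable) eigenpair of
`A = λ·a^{⊗m} + E` under SS-HOPM, for a sufficiently large shift `α`
(here `m = s+2`, so `m−1 = s+1` and `m−2 = s`). -/
theorem sshopm_stability {n s : ℕ} (a : EuclideanSpace ℝ (Fin n)) (ha : ‖a‖ = 1)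
    (lam betaE alpha : ℝ) (hlam : 0 < lam)
    (E A : (Fin (s + 2) → Fin n) → ℝ)
    (hA : A = fun i => lam * (∏ k : Fin (s + 2), a (i k)) + E i)
    (hE : ∀ x y : EuclideanSpace ℝ (Fin n), ‖x‖ = 1 → ‖y‖ = 1 →
      |quadForm (Axm2 E x) y| ≤ betaE / (s + 1))
    (xp : EuclideanSpace ℝ (Fin n)) (lamp : ℝ) (hxp : ‖xp‖ = 1)
    (heig : Axm1 A xp = lamp • xp)
    (hpos : 0 < lamp + alpha)
    (halpha : alpha > (-lamp + (s + 1) * lam *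
      |Real.sin (Real.arccos (inner a xp (𝕜 := ℝ))) *
        (inner a xp (𝕜 := ℝ)) ^ s| + betaE) / 2) :
    ∀ y : EuclideanSpace ℝ (Fin n), ‖y‖ = 1 → inner y xp (𝕜 := ℝ) = 0 →
      -1 < ((s + 1) * quadForm (Axm2 A xp) y + alpha) / (lamp + alpha) := by
  intro y hy hperp
  set c : ℝ := inner a xp (𝕜 := ℝ) with hcdef
  have hc : c = ∑ i, a i * xp i := by
    simp [hcdef, PiLp.inner_apply, RCLike.inner_apply, mul_comm]
  set d : ℝ := ∑ t, y t * a t with hddef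
  have hd : (inner y a (𝕜 := ℝ)) = d := by
    simp [hddef, PiLp.inner_apply, RCLike.inner_apply, mul_comm]
  have hc1 : |c| ≤ 1 := by
    have := abs_real_inner_le_norm a xp
    rwa [ha, hxp, one_mul] at this
  have hc2 : (0:ℝ) ≤ 1 - c ^ 2 := by nlinarith [abs_nonneg c, sq_abs c]
  -- bound on d²
  have hya : (inner y (a - c • xp) (𝕜 := ℝ)) = d := by
    rw [inner_sub_right, real_inner_smul_right, hperp, hd]; ring
  have hnorm : ‖a - c • xp‖ ^ 2 = 1 - c ^ 2 := by
    rw [norm_sub_sq_real, real_inner_smul_right, norm_smul, ha, hxp]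
    simp [Real.norm_eq_abs, ← hcdef, sq_abs]
    ring
  have hd2 : d ^ 2 ≤ 1 - c ^ 2 := by
    have h := abs_real_inner_le_norm y (a - c • xp)
    rw [hya, hy, one_mul] at h
    have := sq_abs d
    nlinarith [norm_nonneg (a - c • xp), abs_nonneg d]
  -- sine of the angle
  have hsin : Real.sin (Real.arccos c) = Real.sqrt (1 - c ^ 2) := by
    rw [Real.sin_arccos]
  set K : ℝ := |Real.sin (Real.arccos c) * c ^ s| with hKdef
  have hsqrt_nonneg : (0:ℝ) ≤ Real.sqrt (1 - c ^ 2) := Real.sqrt_nonneg _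
  have hsqrt_le_one : Real.sqrt (1 - c ^ 2) ≤ 1 := by
    have h := Real.sqrt_le_sqrt (show 1 - c ^ 2 ≤ 1 by nlinarith)
    simpa using h
  have hsqrt_sq : Real.sqrt (1 - c ^ 2) ^ 2 = 1 - c ^ 2 := Real.sq_sqrt hc2
  have hK : K = Real.sqrt (1 - c ^ 2) * |c ^ s| := by
    rw [hKdef, hsin, abs_mul, abs_of_nonneg hsqrt_nonneg]
  -- key bound : c^s * d^2 ≥ -K
  have hbound : -K ≤ c ^ s * d ^ 2 := by
    have h5 : |c ^ s| * d ^ 2 ≤ |c ^ s| * (1 - c ^ 2) :=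
      mul_le_mul_of_nonneg_left hd2 (abs_nonneg _)
    have h6 : |c ^ s| * (1 - c ^ 2) ≤ K := by
      rw [hK]
      have e2 : |c ^ s| * Real.sqrt (1 - c ^ 2) * Real.sqrt (1 - c ^ 2)
          ≤ |c ^ s| * Real.sqrt (1 - c ^ 2) * 1 :=
        mul_le_mul_of_nonneg_left hsqrt_le_one
          (mul_nonneg (abs_nonneg _) hsqrt_nonneg)
      calc |c ^ s| * (1 - c ^ 2)
          = |c ^ s| * Real.sqrt (1 - c ^ 2) * Real.sqrt (1 - c ^ 2) := by
            linear_combination (-|c ^ s|) * Real.mul_self_sqrt hc2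
        _ ≤ |c ^ s| * Real.sqrt (1 - c ^ 2) * 1 := e2
        _ = Real.sqrt (1 - c ^ 2) * |c ^ s| := by ring
    have h7 : -(|c ^ s| * d ^ 2) ≤ c ^ s * d ^ 2 := by
      have := neg_abs_le (c ^ s * d ^ 2)
      rwa [abs_mul, abs_of_nonneg (sq_nonneg d)] at this
    linarith
  -- error bound
  have hQ := hE xp y hxp hy
  have hQ' : -betaE ≤ (s + 1 : ℝ) * quadForm (Axm2 E xp) y := by
    have hs1 : (0:ℝ) < (s:ℝ) + 1 := by positivity
    rcases abs_le.mp hQ with ⟨h1, _⟩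
    have h2 := mul_le_mul_of_nonneg_left h1 hs1.le
    have h3 : ((s:ℝ) + 1) * -(betaE / ((s:ℝ) + 1)) = -betaE := by
      field_simp
    linarith
  -- decomposition
  have key : quadForm (Axm2 A xp) y =
      lam * c ^ s * d ^ 2 + quadForm (Axm2 E xp) y := by
    rw [quad_decomp a lam E A hA xp y, ← hc, ← hddef]
  rw [key, lt_div_iff₀ hpos]
  set Q : ℝ := quadForm (Axm2 E xp) y with hQdef
  clear_value c d K Q
  clear hE hA heig hQ hc hd hddef hcdef hKdef hQdef hya hnorm hsin hK hperp hy hxp ha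
  have hmain : (s + 1 : ℝ) * (-(lam * K)) ≤ (s + 1 : ℝ) * (lam * c ^ s * d ^ 2) := by
    have h8 : -(lam * K) ≤ lam * (c ^ s * d ^ 2) := by
      nlinarith [hbound, hlam.le]
    have hs1 : (0:ℝ) ≤ (s:ℝ) + 1 := by positivity
    nlinarith [mul_le_mul_of_nonneg_left h8 hs1]
  nlinarith [hmain, hQ', halpha]
end
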